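/- The 2-Fuss-Catalan numbers defined by the recurrence C_0 = 1 and C_n = sum over nonnegative integers i,j,k with i+j+k = n-1 of C_i * C_j * C_k satisfy the closed form C_n = (1/(2n+1)) * binomial(3n, n). -/

import Mathlib

open Finset

/-- Generalized ballot numbers: `A n a = (a/(a+3n)) * choose (a+3n) n`,
defined by a Pascal-like recurrence. -/
def A : ℕ → ℕ → ℕ
  | 0, _ => 1
  | _+1, 0 => 0
  | n+1, a+1 => A (n+1) a + A n (a+3)
termination_by n a => (n, a)

lemma A_zero (a : ℕ) : A 0 a = 1 := by cases a <;> simp [A]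

lemma A_succ_zero (n : ℕ) : A (n+1) 0 = 0 := by simp [A]

lemma A_succ_succ (n a : ℕ) : A (n+1) (a+1) = A (n+1) a + A n (a+3) := by
  rw [A]

/-- Convolution sum of `A · 1` against `A · m`. -/
def T (n m : ℕ) : ℕ := ∑ i ∈ Finset.range (n+1), A i 1 * A (n - i) m

lemma T_zero_right (n : ℕ) : T n 0 = A n 1 := by
  unfold T
  rw [Finset.sum_range_succ]
  have h : ∑ i ∈ Finset.range n, A i 1 * A (n - i) 0 = 0 := by
    apply Finset.sum_eq_zero
    intro i hi
    have hi' : i < n := Finset.mem_range.mp hi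
    have : n - i = (n - i - 1) + 1 := by omega
    rw [this, A_succ_zero, mul_zero]
  rw [h]
  simp [A_zero]

lemma T_rec (n m : ℕ) : T (n+1) (m+1) = T (n+1) m + T n (m+3) := by
  unfold T
  rw [Finset.sum_range_succ, Finset.sum_range_succ (n := n+1)]
  have h : ∀ i ∈ Finset.range (n+1),
      A i 1 * A (n + 1 - i) (m+1) = A i 1 * A (n + 1 - i) m + A i 1 * A (n - i) (m+3) := by
    intro i hi
    have hi' : i < n + 1 := Finset.mem_range.mp hi
    have e : n + 1 - i = (n - i) + 1 := by omega
    rw [e, A_succ_succ, mul_add]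
  rw [Finset.sum_congr rfl h, Finset.sum_add_distrib]
  simp [A_zero, Nat.sub_self]
  ring

lemma T_eq (n m : ℕ) : T n m = A n (m+1) := by
  induction n generalizing m with
  | zero => simp [T, A_zero]
  | succ n ih =>
    induction m with
    | zero =>
      rw [T_zero_right]
    | succ m ihm =>
      rw [T_rec, ihm, ih (m+3), A_succ_succ n (m+1)]

lemma key (a n X Y : ℕ)
    (h1 : (a+3*n+3) * X = a * Nat.choose (a+3*n+3) (n+1))
    (h2 : (a+3*n+3) * Y = (a+3) * Nat.choose (a+3*n+3) n) :
    (a+3*n+4) * (X + Y) = (a+1) * Nat.choose (a+3*n+4) (n+1) := by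
  have hp : Nat.choose (a+3*n+4) (n+1)
      = Nat.choose (a+3*n+3) n + Nat.choose (a+3*n+3) (n+1) := by
    exact Nat.choose_succ_succ (a+3*n+3) n
  have hq : Nat.choose (a+3*n+3) (n+1) * (n+1)
      = Nat.choose (a+3*n+3) n * (a+2*n+3) := by
    have h := Nat.choose_succ_right_eq (a+3*n+3) n
    have e : a+3*n+3 - n = a+2*n+3 := by omega
    rw [e] at h
    exact h
  apply Nat.eq_of_mul_eq_mul_left (show 0 < a+3*n+3 by omega)
  rw [hp]
  zify at h1 h2 hq ⊢
  linear_combination ((a:ℤ)+3*n+4) * h1 + ((a:ℤ)+3*n+4) * h2 - 3 * hq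

lemma A_closed (n a : ℕ) : (a + 3*n) * A n a = a * Nat.choose (a + 3*n) n := by
  induction n generalizing a with
  | zero => simp [A_zero]
  | succ n ih =>
    induction a with
    | zero => simp [A_succ_zero]
    | succ a iha =>
      rw [A_succ_succ]
      have h1 : (a+3*n+3) * A (n+1) a = a * Nat.choose (a+3*n+3) (n+1) := by
        have := iha
        have e : a + 3*(n+1) = a+3*n+3 := by ring
        rwa [e] at this
      have h2 : (a+3*n+3) * A n (a+3) = (a+3) * Nat.choose (a+3*n+3) n := by
        have := ih (a+3)
        have e : a + 3 + 3*n = a+3*n+3 := by ring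
        rwa [e] at this
      have e : a + 1 + 3*(n+1) = a+3*n+4 := by ring
      rw [e]
      exact key a n _ _ h1 h2

lemma antidiagonal_conv (m : ℕ) :
    ∑ q ∈ Finset.HasAntidiagonal.antidiagonal m, A q.1 1 * A q.2 1 = A m 2 := by
  rw [Finset.Nat.sum_antidiagonal_eq_sum_range_succ_mk]
  simpa [T] using T_eq m 1

lemma antidiagonal_conv2 (k : ℕ) :
    ∑ p ∈ Finset.HasAntidiagonal.antidiagonal k, A p.1 1 * A p.2 2 = A k 3 := by
  rw [Finset.Nat.sum_antidiagonal_eq_sum_range_succ_mk]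
  simpa [T] using T_eq k 2

/-- The 2-Fuss-Catalan recurrence implies the closed form
`C n = (1/(2n+1)) * choose (3n) n`, stated multiplicatively. -/
theorem fussCatalan_two_closed_form (C : ℕ → ℕ)
    (hC0 : C 0 = 1)
    (hC : ∀ n, 1 ≤ n →
      C n = ∑ p ∈ Finset.HasAntidiagonal.antidiagonal (n - 1), ∑ q ∈ Finset.HasAntidiagonal.antidiagonal p.2,
        C p.1 * C q.1 * C q.2) :
    ∀ n, (2 * n + 1) * C n = Nat.choose (3 * n) n := by
  have CA : ∀ n, C n = A n 1 := by
    intro n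
    induction n using Nat.strong_induction_on with
    | _ n ih =>
      match n with
      | 0 => simpa [A_zero] using hC0
      | Nat.succ k =>
        rw [hC (k+1) (by omega)]
        simp only [Nat.add_sub_cancel]
        have step : ∑ p ∈ Finset.HasAntidiagonal.antidiagonal k, ∑ q ∈ Finset.HasAntidiagonal.antidiagonal p.2,
            C p.1 * C q.1 * C q.2 = ∑ p ∈ Finset.HasAntidiagonal.antidiagonal k, A p.1 1 * A p.2 2 := by
          apply Finset.sum_congr rfl
          intro p hp
          have hp' : p.1 + p.2 = k := Finset.HasAntidiagonal.mem_antidiagonal.mp hp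
          have hinner : ∀ q ∈ Finset.HasAntidiagonal.antidiagonal p.2,
              C p.1 * C q.1 * C q.2 = A p.1 1 * (A q.1 1 * A q.2 1) := by
            intro q hq
            have hq' : q.1 + q.2 = p.2 := Finset.HasAntidiagonal.mem_antidiagonal.mp hq
            rw [ih p.1 (by omega), ih q.1 (by omega), ih q.2 (by omega)]
            ring
          rw [Finset.sum_congr rfl hinner, ← Finset.mul_sum, antidiagonal_conv]
        rw [step, antidiagonal_conv2]
        have : A (k+1) 1 = A (k+1) 0 + A k 3 := A_succ_succ k 0
        rw [this, A_succ_zero, Nat.zero_add]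
  intro n
  rw [CA n]
  have h1 := A_closed n 1
  have h2 := Nat.choose_mul_succ_eq (3*n) n
  apply Nat.eq_of_mul_eq_mul_left (show 0 < 3*n+1 by omega)
  have e : 3*n + 1 - n = 2*n+1 := by omega
  rw [e] at h2
  have e2 : 1 + 3*n = 3*n + 1 := by omega
  rw [e2] at h1
  zify at h1 h2 ⊢
  linear_combination (2*(n:ℤ)+1) * h1 - h2
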